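/- arXiv:1706.01634 — 10 statements merged into one kernel-verified Lean document; each statement's English description precedes it below -/
import Mathlib

section
/- Let (X, d) be a complete metric space and T : X → X a mapping such that for some nonnegative reals α, β, γ, δ, η with α + β + γ + δ + η < 1, d(Tx, Ty) ≤ α·d(x,y) + β·d(x,Tx) + γ·d(y,Ty) + δ·d(x,Ty) + η·d(y,Tx) for all x, y ∈ X. Then T has a unique fixed point in X. -/
theorem hardy_rogers_fixed_point {X : Type*} [MetricSpace X] [CompleteSpace X] [Nonempty X]
    (T : X → X) (α β γ δ η : ℝ)
    (hα : 0 ≤ α) (hβ : 0 ≤ β) (hγ : 0 ≤ γ) (hδ : 0 ≤ δ) (hη : 0 ≤ η)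
    (hsum : α + β + γ + δ + η < 1)
    (hT : ∀ x y : X, dist (T x) (T y) ≤
      α * dist x y + β * dist x (T x) + γ * dist y (T y) + δ * dist x (T y) + η * dist y (T x)) :
    ∃! x : X, T x = x := by
  -- set up the contraction constant
  set c₂ : ℝ := (β + γ + δ + η) / 2 with hc₂
  set c₁ : ℝ := α + c₂ with hc₁
  have hc₂0 : 0 ≤ c₂ := by positivity
  have hc₁0 : 0 ≤ c₁ := by positivity
  have hc₂1 : c₂ < 1 := by
    rw [hc₂]; linarith
  set k : ℝ := c₁ / (1 - c₂) with hk
  have hk0 : 0 ≤ k := div_nonneg hc₁0 (by linarith)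
  have hk1 : k < 1 := by
    rw [hk, div_lt_one (by linarith)]
    simp only [hc₁, hc₂]; linarith
  -- key: one-step contraction along the orbit
  have key : ∀ z : X, dist (T z) (T (T z)) ≤ k * dist z (T z) := by
    intro z
    set a := dist z (T z) with ha
    set b := dist (T z) (T (T z)) with hb
    have h1 := hT z (T z)
    have h2 := hT (T z) z
    have htri : dist z (T (T z)) ≤ a + b := dist_triangle z (T z) (T (T z))
    have hsymm : dist (T (T z)) (T z) = b := dist_comm _ _
    have hd0 : dist (T z) (T z) = 0 := dist_self _
    have h2' : b ≤ α * a + β * b + γ * a + η * dist z (T (T z)) := by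
      rw [dist_comm (T z) z] at h2
      rw [hsymm] at h2
      calc b ≤ α * a + β * b + γ * a + δ * dist (T z) (T z) + η * dist z (T (T z)) := h2
        _ = α * a + β * b + γ * a + η * dist z (T (T z)) := by rw [hd0]; ring
    have h1' : b ≤ α * a + β * a + γ * b + δ * dist z (T (T z)) := by
      calc b ≤ α * a + β * a + γ * b + δ * dist z (T (T z)) + η * dist (T z) (T z) := h1
        _ = α * a + β * a + γ * b + δ * dist z (T (T z)) := by rw [hd0]; ring
    have hsum2 : 2 * b ≤ 2 * c₁ * a + 2 * c₂ * b := by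
      have hδab : δ * dist z (T (T z)) ≤ δ * (a + b) := by nlinarith
      have hηab : η * dist z (T (T z)) ≤ η * (a + b) := by nlinarith
      simp only [hc₁, hc₂]
      nlinarith
    have : (1 - c₂) * b ≤ c₁ * a := by linarith
    rw [hk]
    rw [div_mul_eq_mul_div, le_div_iff₀ (by linarith)]
    linarith [mul_comm b (1 - c₂)]
  -- build the orbit from an arbitrary point
  obtain ⟨x₀⟩ := ‹Nonempty X›
  set u : ℕ → X := fun n => T^[n] x₀ with hu
  have hstep : ∀ n, u (n + 1) = T (u n) := by
    intro n; simp [hu, Function.iterate_succ_apply']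
  have hgeo : ∀ n, dist (u n) (u (n + 1)) ≤ dist x₀ (T x₀) * k ^ n := by
    intro n
    induction n with
    | zero => simp [hu]
    | succ m ih =>
      have : dist (u (m + 1)) (u (m + 2)) ≤ k * dist (u m) (u (m + 1)) := by
        rw [hstep m, hstep (m + 1), hstep m]
        exact key (u m)
      calc dist (u (m + 1)) (u (m + 2)) ≤ k * dist (u m) (u (m + 1)) := this
        _ ≤ k * (dist x₀ (T x₀) * k ^ m) := by
            exact mul_le_mul_of_nonneg_left ih hk0
        _ = dist x₀ (T x₀) * k ^ (m + 1) := by ring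
  have hcauchy : CauchySeq u := cauchySeq_of_le_geometric k (dist x₀ (T x₀)) hk1 hgeo
  obtain ⟨x, hx⟩ := cauchySeq_tendsto_of_complete hcauchy
  -- limits of distances
  have hdn : Filter.Tendsto (fun n => dist (u n) x) Filter.atTop (nhds 0) := by
    have : Filter.Tendsto (fun _ : ℕ => x) Filter.atTop (nhds x) := tendsto_const_nhds
    simpa using hx.dist this
  have hdn1 : Filter.Tendsto (fun n => dist (u (n + 1)) x) Filter.atTop (nhds 0) :=
    hdn.comp (Filter.tendsto_add_atTop_nat 1)
  have hdnn : Filter.Tendsto (fun n => dist (u n) (u (n + 1))) Filter.atTop (nhds 0) := by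
    have hg : Filter.Tendsto (fun n => dist x₀ (T x₀) * k ^ n) Filter.atTop (nhds 0) := by
      have := (tendsto_pow_atTop_nhds_zero_of_lt_one hk0 hk1).const_mul (dist x₀ (T x₀))
      simpa using this
    exact squeeze_zero (fun n => dist_nonneg) hgeo hg
  -- T x = x
  have hfix : T x = x := by
    have hbound : ∀ n, dist (T x) x ≤
        α * dist x (u n) + β * dist x (T x) + γ * dist (u n) (u (n + 1)) +
        δ * dist x (u (n + 1)) + η * dist (u n) (T x) + dist (u (n + 1)) x := by
      intro n
      have h := hT x (u n)
      rw [← hstep n] at h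
      calc dist (T x) x ≤ dist (T x) (u (n + 1)) + dist (u (n + 1)) x := dist_triangle _ _ _
        _ ≤ _ := by linarith
    have htend : Filter.Tendsto (fun n =>
        α * dist x (u n) + β * dist x (T x) + γ * dist (u n) (u (n + 1)) +
        δ * dist x (u (n + 1)) + η * dist (u n) (T x) + dist (u (n + 1)) x)
        Filter.atTop (nhds ((β + η) * dist x (T x))) := by
      have h1 : Filter.Tendsto (fun n => dist x (u n)) Filter.atTop (nhds 0) := by
        simpa [dist_comm] using hdn
      have h2 : Filter.Tendsto (fun n => dist x (u (n + 1))) Filter.atTop (nhds 0) := by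
        simpa [dist_comm] using hdn1
      have h3 : Filter.Tendsto (fun n => dist (u n) (T x)) Filter.atTop (nhds (dist x (T x))) :=
        hx.dist tendsto_const_nhds
      have hc : Filter.Tendsto (fun _ : ℕ => β * dist x (T x)) Filter.atTop
          (nhds (β * dist x (T x))) := tendsto_const_nhds
      have := (((((h1.const_mul α).add hc).add
        (hdnn.const_mul γ)).add (h2.const_mul δ)).add (h3.const_mul η)).add hdn1
      convert this using 2
      ring
    have hle : dist (T x) x ≤ (β + η) * dist x (T x) := ge_of_tendsto' htend hbound
    rw [dist_comm x (T x)] at hle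
    have hd0 : dist (T x) x ≤ 0 := by nlinarith
    have := dist_nonneg (x := T x) (y := x)
    have : dist (T x) x = 0 := le_antisymm hd0 this
    exact dist_eq_zero.mp this
  refine ⟨x, hfix, ?_⟩
  intro y hy
  have h := hT y x
  rw [hy, hfix] at h
  simp only [dist_self, mul_zero] at h
  have hd : dist y x ≤ (α + δ + η) * dist y x := by
    rw [dist_comm x y] at h
    nlinarith [h]
  have : dist y x = 0 := by nlinarith [dist_nonneg (x := y) (y := x)]
  exact dist_eq_zero.mp this
end

section
/- Let (X, d) be a complete metric space and T : X → X a mapping such that for some β ∈ [0, 1/2), d(Tx, Ty) ≤ β·(d(x,Tx) + d(y,Ty)) for all x, y ∈ X. Then T has a unique fixed point in X. -/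
theorem kannan_fixed_point {X : Type*} [MetricSpace X] [CompleteSpace X] [Nonempty X]
    (T : X → X) (β : ℝ) (hβ0 : 0 ≤ β) (hβ : β < 1 / 2)
    (hT : ∀ x y : X, dist (T x) (T y) ≤ β * (dist x (T x) + dist y (T y))) :
    ∃! x : X, T x = x := by
  obtain ⟨x0⟩ := ‹Nonempty X›
  set u : ℕ → X := fun n => T^[n] x0 with hu
  have hustep : ∀ n, u (n + 1) = T (u n) := by
    intro n; simp [hu, Function.iterate_succ_apply']
  have h1β : (0:ℝ) < 1 - β := by linarith
  set r : ℝ := β / (1 - β) with hr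
  have hr0 : 0 ≤ r := div_nonneg hβ0 h1β.le
  have hr1 : r < 1 := (div_lt_one h1β).2 (by linarith)
  -- step estimate
  have hstep : ∀ n, dist (u (n+1)) (u (n+2)) ≤ r * dist (u n) (u (n+1)) := by
    intro n
    have h := hT (u n) (u (n+1))
    rw [← hustep n, ← hustep (n+1)] at h
    rw [hr, div_mul_eq_mul_div, le_div_iff₀ h1β]
    nlinarith [dist_nonneg (α := X) (x := u (n+1)) (y := u (n+2))]
  have hgeom : ∀ n, dist (u n) (u (n+1)) ≤ dist (u 0) (u 1) * r ^ n := by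
    intro n
    induction n with
    | zero => simp
    | succ n ih =>
      calc dist (u (n+1)) (u (n+2)) ≤ r * dist (u n) (u (n+1)) := hstep n
      _ ≤ r * (dist (u 0) (u 1) * r ^ n) := by
          exact mul_le_mul_of_nonneg_left ih hr0
      _ = dist (u 0) (u 1) * r ^ (n+1) := by ring
  have hcauchy : CauchySeq u := cauchySeq_of_le_geometric r _ hr1 hgeom
  obtain ⟨x, hx⟩ := cauchySeq_tendsto_of_complete hcauchy
  -- the bound sequence tends to 0
  have hd0 : Filter.Tendsto (fun n => dist (u n) (u (n+1))) Filter.atTop (nhds 0) := by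
    apply squeeze_zero (fun n => dist_nonneg) hgeom
    have := (tendsto_pow_atTop_nhds_zero_of_lt_one hr0 hr1).const_mul (dist (u 0) (u 1))
    simpa using this
  have hx1 : Filter.Tendsto (fun n => u (n+1)) Filter.atTop (nhds x) :=
    hx.comp (Filter.tendsto_add_atTop_nat 1)
  have hdx : Filter.Tendsto (fun n => dist x (u (n+1)) + β * dist (u n) (u (n+1)))
      Filter.atTop (nhds 0) := by
    have h1 : Filter.Tendsto (fun n => dist x (u (n+1))) Filter.atTop (nhds 0) := by
      simpa using ((tendsto_const_nhds : Filter.Tendsto (fun _ : ℕ => x) Filter.atTop (nhds x)).dist hx1)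
    have h2 := hd0.const_mul β
    simpa using h1.add h2
  have hfix : T x = x := by
    have key : ∀ n, (1 - β) * dist x (T x) ≤
        dist x (u (n+1)) + β * dist (u n) (u (n+1)) := by
      intro n
      have h := hT (u n) x
      rw [← hustep n] at h
      have htri : dist x (T x) ≤ dist x (u (n+1)) + dist (u (n+1)) (T x) :=
        dist_triangle _ _ _
      nlinarith [dist_nonneg (α := X) (x := x) (y := T x)]
    have hle : (1 - β) * dist x (T x) ≤ 0 := ge_of_tendsto' hdx key
    have : dist x (T x) ≤ 0 := by
      by_contra h
      push_neg at h
      nlinarith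
    have := le_antisymm this dist_nonneg
    rw [dist_comm] at this
    exact eq_of_dist_eq_zero this
  refine ⟨x, hfix, fun y hy => ?_⟩
  have h := hT y x
  rw [hy, hfix] at h
  simp at h
  exact h
end

section
/- Let (X, d) be a complete metric space and T : X → X a mapping such that for some β ∈ [0, 1/2), d(Tx, Ty) ≤ β·(d(x,Ty) + d(y,Tx)) for all x, y ∈ X. Then T has a unique fixed point in X. -/
theorem chatterjea_fixed_point {X : Type*} [MetricSpace X] [CompleteSpace X] [Nonempty X]
    (T : X → X) (β : ℝ) (hβ0 : 0 ≤ β) (hβ : β < 1 / 2)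
    (hT : ∀ x y : X, dist (T x) (T y) ≤ β * (dist x (T y) + dist y (T x))) :
    ∃! x : X, T x = x := by
  obtain ⟨x₀⟩ := ‹Nonempty X›
  set k : ℝ := β / (1 - β) with hk
  have hβ1 : β < 1 := by linarith
  have h1β : (0:ℝ) < 1 - β := by linarith
  have hk0 : 0 ≤ k := div_nonneg hβ0 h1β.le
  have hk1 : k < 1 := (div_lt_one h1β).2 (by linarith)
  -- key contraction step
  have key : ∀ x : X, dist (T x) (T (T x)) ≤ k * dist x (T x) := by
    intro x
    have h := hT x (T x)
    rw [dist_self] at h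
    have h2 : dist x (T (T x)) ≤ dist x (T x) + dist (T x) (T (T x)) := dist_triangle _ _ _
    have h3 : dist (T x) (T (T x)) ≤ β * (dist x (T x) + dist (T x) (T (T x))) := by
      nlinarith [mul_le_mul_of_nonneg_left h2 hβ0]
    rw [hk, div_mul_eq_mul_div, le_div_iff₀ h1β]
    nlinarith
  set u : ℕ → X := fun n => T^[n] x₀ with hu
  have hstep : ∀ n, dist (u n) (u (n + 1)) ≤ dist x₀ (T x₀) * k ^ n := by
    intro n
    induction n with
    | zero => simp [hu]
    | succ n ih =>
      have : dist (u (n+1)) (u (n+2)) ≤ k * dist (u n) (u (n+1)) := by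
        have := key (u n)
        simpa [hu, Function.iterate_succ_apply'] using this
      calc dist (u (n+1)) (u (n+2)) ≤ k * dist (u n) (u (n+1)) := this
        _ ≤ k * (dist x₀ (T x₀) * k ^ n) := by
            exact mul_le_mul_of_nonneg_left ih hk0
        _ = dist x₀ (T x₀) * k ^ (n+1) := by ring
  have hcauchy : CauchySeq u := cauchySeq_of_le_geometric k _ hk1 hstep
  obtain ⟨x, hx⟩ := cauchySeq_tendsto_of_complete hcauchy
  -- show T x = x
  have hTx : T x = x := by
    have hlim1 : Filter.Tendsto (fun n => dist (T x) (u (n + 1))) Filter.atTop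
        (nhds (dist (T x) x)) := by
      exact (Continuous.tendsto (continuous_const.dist continuous_id) x).comp
        (hx.comp (Filter.tendsto_add_atTop_nat 1))
    have hlim2 : Filter.Tendsto (fun n => β * (dist x (u (n + 1)) + dist (u n) (T x)))
        Filter.atTop (nhds (β * (dist x x + dist x (T x)))) := by
      apply Filter.Tendsto.const_mul
      exact ((Continuous.tendsto (continuous_const.dist continuous_id) x).comp
        (hx.comp (Filter.tendsto_add_atTop_nat 1))).add
        ((Continuous.tendsto (continuous_id.dist continuous_const) x).comp hx)
    have hle : dist (T x) x ≤ β * (dist x x + dist x (T x)) := by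
      refine le_of_tendsto_of_tendsto' hlim1 hlim2 ?_
      intro n
      have := hT x (u n)
      have heq : T (u n) = u (n + 1) := by
        simp [hu, Function.iterate_succ_apply']
      rw [heq] at this
      exact this
    rw [dist_self, zero_add, dist_comm x (T x)] at hle
    have : dist (T x) x = 0 := by nlinarith [dist_nonneg (x := T x) (y := x)]
    exact dist_eq_zero.mp this
  refine ⟨x, hTx, ?_⟩
  intro y hy
  have h := hT y x
  rw [hy, hTx, dist_comm x y] at h
  have : dist y x = 0 := by nlinarith [dist_nonneg (x := y) (y := x)]
  exact dist_eq_zero.mp this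
end

section
/- Let (X, d) be a complete metric space and T : X → X a mapping such that for some nonnegative reals α, β, γ with α + β + γ < 1, d(Tx, Ty) ≤ α·d(x,y) + β·d(x,Tx) + γ·d(y,Ty) for all x, y ∈ X. Then T has a unique fixed point in X. -/
open Filter Topology

theorem reich_fixed_point {X : Type*} [MetricSpace X] [CompleteSpace X] [Nonempty X]
    (T : X → X) (α β γ : ℝ)
    (hα : 0 ≤ α) (hβ : 0 ≤ β) (hγ : 0 ≤ γ) (hsum : α + β + γ < 1)
    (hT : ∀ x y : X, dist (T x) (T y) ≤
      α * dist x y + β * dist x (T x) + γ * dist y (T y)) :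
    ∃! x : X, T x = x := by
  have hγ1 : γ < 1 := by linarith
  have h1γ : 0 < 1 - γ := by linarith
  set k : ℝ := (α + β) / (1 - γ) with hk
  have hk0 : 0 ≤ k := div_nonneg (by linarith) h1γ.le
  have hk1 : k < 1 := (div_lt_one h1γ).mpr (by linarith)
  set x0 : X := Classical.arbitrary X
  set u : ℕ → X := fun n => T^[n] x0 with hu
  have hustep : ∀ n, u (n + 1) = T (u n) := fun n => Function.iterate_succ_apply' T n x0
  -- contraction step for consecutive distances
  have step : ∀ n, dist (u (n + 1)) (u (n + 2)) ≤ k * dist (u n) (u (n + 1)) := by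
    intro n
    have h := hT (u n) (u (n + 1))
    rw [← hustep n, ← hustep (n + 1)] at h
    have h2 : (1 - γ) * dist (u (n + 1)) (u (n + 2)) ≤ (α + β) * dist (u n) (u (n + 1)) := by
      nlinarith [h]
    rw [hk, div_mul_eq_mul_div, le_div_iff₀ h1γ]
    nlinarith [h2]
  have geom : ∀ n, dist (u n) (u (n + 1)) ≤ dist (u 0) (u 1) * k ^ n := by
    intro n
    induction n with
    | zero => simp
    | succ m ih =>
      calc dist (u (m + 1)) (u (m + 2)) ≤ k * dist (u m) (u (m + 1)) := step m
        _ ≤ k * (dist (u 0) (u 1) * k ^ m) := by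
            exact mul_le_mul_of_nonneg_left ih hk0
        _ = dist (u 0) (u 1) * k ^ (m + 1) := by ring
  have hcauchy : CauchySeq u := cauchySeq_of_le_geometric k (dist (u 0) (u 1)) hk1 geom
  obtain ⟨x, hx⟩ := cauchySeq_tendsto_of_complete hcauchy
  have hx' : Tendsto (fun n => u (n + 1)) atTop (𝓝 x) :=
    hx.comp (tendsto_add_atTop_nat 1)
  -- x is a fixed point
  have hbound : ∀ n, dist (T x) x ≤
      α * dist x (u n) + β * dist x (T x) + γ * dist (u n) (u (n + 1)) + dist (u (n + 1)) x := by
    intro n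
    have h := hT x (u n)
    rw [← hustep n] at h
    calc dist (T x) x ≤ dist (T x) (u (n + 1)) + dist (u (n + 1)) x := dist_triangle _ _ _
      _ ≤ α * dist x (u n) + β * dist x (T x) + γ * dist (u n) (u (n + 1)) + dist (u (n + 1)) x :=
          by linarith
  have hlim : Tendsto (fun n => α * dist x (u n) + β * dist x (T x) +
      γ * dist (u n) (u (n + 1)) + dist (u (n + 1)) x) atTop (𝓝 (β * dist x (T x))) := by
    have h1 : Tendsto (fun n => dist x (u n)) atTop (𝓝 0) := by
      have := hx.dist (tendsto_const_nhds : Tendsto (fun _ : ℕ => x) atTop (𝓝 x))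
      simpa [dist_comm] using this
    have h2 : Tendsto (fun n => dist (u n) (u (n + 1))) atTop (𝓝 0) := by
      simpa using hx.dist hx'
    have h3 : Tendsto (fun n => dist (u (n + 1)) x) atTop (𝓝 0) := by
      have := hx'.dist (tendsto_const_nhds : Tendsto (fun _ : ℕ => x) atTop (𝓝 x))
      simpa using this
    have := (((h1.const_mul α).add (tendsto_const_nhds : Tendsto (fun _ : ℕ => β * dist x (T x))
      atTop (𝓝 (β * dist x (T x))))).add (h2.const_mul γ)).add h3
    simpa using this
  have hfix : dist (T x) x ≤ β * dist x (T x) :=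
    ge_of_tendsto hlim (Eventually.of_forall hbound)
  have hTx : T x = x := by
    rw [dist_comm x (T x)] at hfix
    have : dist (T x) x = 0 := by nlinarith [dist_nonneg (x := T x) (y := x)]
    exact dist_eq_zero.mp this
  refine ⟨x, hTx, fun y hy => ?_⟩
  have h := hT y x
  rw [hy, hTx] at h
  simp only [dist_self, mul_zero, add_zero] at h
  have : dist y x = 0 := by nlinarith [dist_nonneg (x := y) (y := x)]
  exact dist_eq_zero.mp this
end

section
/- Let (X, d) be a complete metric space and T : X → X a mapping such that for some nonnegative reals α, β, γ, δ with α + β + γ + 2δ < 1, d(Tx, Ty) ≤ α·d(x,y) + β·d(x,Tx) + γ·d(y,Ty) + δ·(d(x,Ty) + d(y,Tx)) for all x, y ∈ X. Then T has a unique fixed point in X. -/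
theorem ciric_generalized_contraction_fixed_point {X : Type*} [MetricSpace X] [CompleteSpace X]
    [Nonempty X] (T : X → X) (α β γ δ : ℝ)
    (hα : 0 ≤ α) (hβ : 0 ≤ β) (hγ : 0 ≤ γ) (hδ : 0 ≤ δ)
    (hsum : α + β + γ + 2 * δ < 1)
    (hT : ∀ x y : X, dist (T x) (T y) ≤
      α * dist x y + β * dist x (T x) + γ * dist y (T y) + δ * (dist x (T y) + dist y (T x))) :
    ∃! x : X, T x = x := by
  have hden : 0 < 1 - γ - δ := by linarith
  set k : ℝ := (α + β + δ) / (1 - γ - δ) with hk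
  have hk0 : 0 ≤ k := by positivity
  have hk1 : k < 1 := by
    rw [hk, div_lt_one hden]; linarith
  -- step contraction
  have hstep : ∀ x : X, dist (T x) (T (T x)) ≤ k * dist x (T x) := by
    intro x
    have h := hT x (T x)
    have htri : dist x (T (T x)) ≤ dist x (T x) + dist (T x) (T (T x)) := dist_triangle _ _ _
    have h0 : dist (T x) (T x) = 0 := dist_self _
    have : (1 - γ - δ) * dist (T x) (T (T x)) ≤ (α + β + δ) * dist x (T x) := by
      nlinarith [@dist_nonneg X _ (T x) (T (T x)), @dist_nonneg X _ x (T x)]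
    rw [hk, div_mul_eq_mul_div, le_div_iff₀ hden]
    linarith
  obtain ⟨x0⟩ := ‹Nonempty X›
  set f : ℕ → X := fun n => T^[n] x0 with hf
  have hfsucc : ∀ n, f (n + 1) = T (f n) := fun n => Function.iterate_succ_apply' T n x0
  have hgeom : ∀ n, dist (f n) (f (n + 1)) ≤ dist x0 (T x0) * k ^ n := by
    intro n
    induction n with
    | zero => simp [hf]
    | succ n ih =>
      have h1 : dist (f (n+1)) (f (n+2)) ≤ k * dist (f n) (f (n+1)) := by
        rw [hfsucc n, hfsucc (n+1), hfsucc n]; exact hstep (f n)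
      calc dist (f (n+1)) (f (n+2)) ≤ k * dist (f n) (f (n+1)) := h1
        _ ≤ k * (dist x0 (T x0) * k ^ n) := by
            exact mul_le_mul_of_nonneg_left ih hk0
        _ = dist x0 (T x0) * k ^ (n+1) := by ring
  have hcauchy : CauchySeq f := cauchySeq_of_le_geometric k _ hk1 hgeom
  obtain ⟨x, hx⟩ := cauchySeq_tendsto_of_complete hcauchy
  have hxsucc : Filter.Tendsto (fun n => f (n + 1)) Filter.atTop (nhds x) :=
    hx.comp (Filter.tendsto_add_atTop_nat 1)
  -- limits of distances
  have hd1 : Filter.Tendsto (fun n => dist (T x) (f (n + 1))) Filter.atTop (nhds (dist (T x) x)) :=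
    (Continuous.tendsto (continuous_const.dist continuous_id) x).comp hxsucc |>.congr (fun n => rfl)
  have hd2 : Filter.Tendsto (fun n => dist x (f n)) Filter.atTop (nhds 0) := by
    simpa [dist_self] using Filter.Tendsto.dist (tendsto_const_nhds (x := x)) hx
  have hd3 : Filter.Tendsto (fun n => dist (f n) (f (n + 1))) Filter.atTop (nhds 0) := by
    have := Filter.Tendsto.dist hx hxsucc
    simpa using this
  have hd4 : Filter.Tendsto (fun n => dist x (f (n + 1))) Filter.atTop (nhds 0) := by
    simpa [dist_self] using Filter.Tendsto.dist (tendsto_const_nhds (x := x)) hxsucc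
  have hd5 : Filter.Tendsto (fun n => dist (f n) (T x)) Filter.atTop (nhds (dist x (T x))) := by
    exact Filter.Tendsto.dist hx tendsto_const_nhds
  have hRHS : Filter.Tendsto (fun n => α * dist x (f n) + β * dist x (T x)
      + γ * dist (f n) (f (n + 1)) + δ * (dist x (f (n + 1)) + dist (f n) (T x)))
      Filter.atTop (nhds (β * dist x (T x) + δ * dist x (T x))) := by
    have h1 : Filter.Tendsto (fun n => α * dist x (f n) + β * dist x (T x)
        + γ * dist (f n) (f (n + 1)) + δ * (dist x (f (n + 1)) + dist (f n) (T x)))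
        Filter.atTop (nhds (α * 0 + β * dist x (T x) + γ * 0 + δ * (0 + dist x (T x)))) :=
      (((hd2.const_mul α).add (tendsto_const_nhds (x := β * dist x (T x)))).add
        (hd3.const_mul γ)).add ((hd4.add hd5).const_mul δ)
    simpa using h1
  have hkey : dist (T x) x ≤ β * dist x (T x) + δ * dist x (T x) := by
    refine le_of_tendsto_of_tendsto' hd1 hRHS (fun n => ?_)
    simpa [hfsucc n] using hT x (f n)
  have hfix : T x = x := by
    have hd : dist (T x) x = 0 := by
      have h1 : dist x (T x) = dist (T x) x := dist_comm _ _
      nlinarith [@dist_nonneg X _ (T x) x]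
    exact dist_eq_zero.mp hd
  refine ⟨x, hfix, fun y hy => ?_⟩
  have h := hT y x
  rw [hy, hfix, dist_self, dist_self] at h
  have : dist y x = 0 := by
    have hc : dist x y = dist y x := dist_comm _ _
    nlinarith [@dist_nonneg X _ y x]
  exact dist_eq_zero.mp this
end

section
/- Let (X, d) be a complete metric space and T : X → X a mapping. Suppose there exist real numbers α ∈ [0,1), β ∈ [0, 1/2), γ ∈ [0, 1/2) such that for each pair x, y ∈ X at least one of the following holds: (i) d(Tx,Ty) ≤ α·d(x,y); (ii) d(Tx,Ty) ≤ β·(d(x,Tx)+d(y,Ty)); (iii) d(Tx,Ty) ≤ γ·(d(x,Ty)+d(y,Tx)). Then T has a unique fixed point in X. -/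
set_option maxHeartbeats 1000000


theorem zamfirescu_fixed_point {X : Type*} [MetricSpace X] [CompleteSpace X] [Nonempty X]
    (T : X → X) (α β γ : ℝ)
    (hα0 : 0 ≤ α) (hα : α < 1) (hβ0 : 0 ≤ β) (hβ : β < 1 / 2) (hγ0 : 0 ≤ γ) (hγ : γ < 1 / 2)
    (hT : ∀ x y : X,
      dist (T x) (T y) ≤ α * dist x y ∨
      dist (T x) (T y) ≤ β * (dist x (T x) + dist y (T y)) ∨
      dist (T x) (T y) ≤ γ * (dist x (T y) + dist y (T x))) :
    ∃! x : X, T x = x := by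
  set δ : ℝ := max α (max (β / (1 - β)) (γ / (1 - γ))) with hδdef
  have hb1 : (0:ℝ) < 1 - β := by linarith
  have hg1 : (0:ℝ) < 1 - γ := by linarith
  have hδ0 : 0 ≤ δ := le_max_of_le_left hα0
  have hδ1 : δ < 1 := by
    apply max_lt hα
    apply max_lt
    · rw [div_lt_one hb1]; linarith
    · rw [div_lt_one hg1]; linarith
  have hβδ : β ≤ δ * (1 - β) := by
    have : β / (1 - β) ≤ δ := le_max_of_le_right (le_max_left _ _)
    calc β = (β / (1 - β)) * (1 - β) := by field_simp
    _ ≤ δ * (1 - β) := by nlinarith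
  have hγδ : γ ≤ δ * (1 - γ) := by
    have : γ / (1 - γ) ≤ δ := le_max_of_le_right (le_max_right _ _)
    calc γ = (γ / (1 - γ)) * (1 - γ) := by field_simp
    _ ≤ δ * (1 - γ) := by nlinarith
  have hαδ : α ≤ δ := le_max_left _ _
  -- key contraction on orbit
  have key1 : ∀ x : X, dist (T x) (T (T x)) ≤ δ * dist x (T x) := by
    intro x
    have hd0 : 0 ≤ dist x (T x) := dist_nonneg
    have hd1 : 0 ≤ dist (T x) (T (T x)) := dist_nonneg
    rcases hT x (T x) with h | h | h
    · nlinarith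
    · nlinarith
    · have htri : dist x (T (T x)) ≤ dist x (T x) + dist (T x) (T (T x)) := dist_triangle _ _ _
      have : dist (T x) (T x) = 0 := dist_self _
      nlinarith
  -- general key inequality
  have key2 : ∀ x y : X, dist (T x) (T y) ≤ δ * dist x y + 2 * δ * dist x (T x) := by
    intro x y
    have h0 : 0 ≤ dist x y := dist_nonneg
    have h1 : 0 ≤ dist x (T x) := dist_nonneg
    have h2 : 0 ≤ dist (T x) (T y) := dist_nonneg
    rcases hT x y with h | h | h
    · nlinarith
    · have htri : dist y (T y) ≤ dist y x + dist x (T x) + dist (T x) (T y) := by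
        calc dist y (T y) ≤ dist y (T x) + dist (T x) (T y) := dist_triangle _ _ _
        _ ≤ (dist y x + dist x (T x)) + dist (T x) (T y) := by
            have := dist_triangle y x (T x); linarith
      rw [dist_comm y x] at htri
      nlinarith
    · have h3 : dist x (T y) ≤ dist x (T x) + dist (T x) (T y) := dist_triangle _ _ _
      have h4 : dist y (T x) ≤ dist y x + dist x (T x) := dist_triangle _ _ _
      rw [dist_comm y x] at h4
      nlinarith
  -- Picard iteration
  obtain ⟨x0⟩ := ‹Nonempty X›
  set u : ℕ → X := fun n => T^[n] x0 with hu
  have hsucc : ∀ n, u (n + 1) = T (u n) := by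
    intro n; simp [hu, Function.iterate_succ_apply']
  have hgeo : ∀ n, dist (u n) (u (n + 1)) ≤ dist x0 (T x0) * δ ^ n := by
    intro n
    induction n with
    | zero => simp [hu]
    | succ n ih =>
      have := key1 (u n)
      rw [← hsucc n, ← hsucc (n+1)] at this
      calc dist (u (n+1)) (u (n+2)) ≤ δ * dist (u n) (u (n+1)) := this
      _ ≤ δ * (dist x0 (T x0) * δ ^ n) := by nlinarith
      _ = dist x0 (T x0) * δ ^ (n + 1) := by ring
  have hC : CauchySeq u := cauchySeq_of_le_geometric δ (dist x0 (T x0)) hδ1 hgeo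
  obtain ⟨z, hz⟩ := cauchySeq_tendsto_of_complete hC
  -- show T z = z
  have hdz : Filter.Tendsto (fun n => dist (u (n + 1)) (T z)) Filter.atTop (nhds 0) := by
    have hub : ∀ n, dist (u (n + 1)) (T z) ≤ δ * dist (u n) z + 2 * δ * (dist x0 (T x0) * δ ^ n) := by
      intro n
      rw [hsucc n]
      calc dist (T (u n)) (T z) ≤ δ * dist (u n) z + 2 * δ * dist (u n) (T (u n)) := key2 (u n) z
      _ ≤ δ * dist (u n) z + 2 * δ * (dist x0 (T x0) * δ ^ n) := by
          have := hgeo n; rw [hsucc n] at this; nlinarith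
    have hlim : Filter.Tendsto (fun n => δ * dist (u n) z + 2 * δ * (dist x0 (T x0) * δ ^ n))
        Filter.atTop (nhds 0) := by
      have h1 : Filter.Tendsto (fun n => dist (u n) z) Filter.atTop (nhds 0) :=
        tendsto_iff_dist_tendsto_zero.mp hz
      have h2 : Filter.Tendsto (fun n : ℕ => δ ^ n) Filter.atTop (nhds 0) :=
        tendsto_pow_atTop_nhds_zero_of_lt_one hδ0 hδ1
      have := ((h1.const_mul δ).add ((h2.const_mul (dist x0 (T x0))).const_mul (2 * δ)))
      simpa using this.congr (fun n => by ring)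
    exact squeeze_zero (fun n => dist_nonneg) hub hlim
  have hTz : Filter.Tendsto (fun n => u (n + 1)) Filter.atTop (nhds (T z)) :=
    tendsto_iff_dist_tendsto_zero.mpr hdz
  have hz' : Filter.Tendsto (fun n => u (n + 1)) Filter.atTop (nhds z) :=
    hz.comp (Filter.tendsto_add_atTop_nat 1)
  have hfix : T z = z := tendsto_nhds_unique hTz hz'
  refine ⟨z, hfix, ?_⟩
  intro y hy
  have h0 : 0 ≤ dist y z := dist_nonneg
  have heq : dist y z = 0 := by
    rcases hT y z with h | h | h
    · rw [hy, hfix] at h; nlinarith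
    · rw [hy, hfix] at h
      simp only [dist_self, add_zero, mul_zero] at h
      nlinarith
    · rw [hy, hfix] at h; rw [dist_comm z y] at h; nlinarith
  rw [← dist_eq_zero]; exact heq
end

section
/- Let T : X → X satisfy the Hardy–Rogers condition: for nonnegative reals α, β, γ, δ, η with α + β + γ + δ + η < 1, d(Tx, Ty) ≤ α·d(x,y) + β·d(x,Tx) + γ·d(y,Ty) + δ·d(x,Ty) + η·d(y,Tx) for all x, y. Then for every x₀ ∈ X, the Picard iteration sequence xₙ₊₁ = T xₙ is a Cauchy sequence. -/
theorem hardy_rogers_picard_cauchy {X : Type*} [MetricSpace X]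
    (T : X → X) (α β γ δ η : ℝ)
    (hα : 0 ≤ α) (hβ : 0 ≤ β) (hγ : 0 ≤ γ) (hδ : 0 ≤ δ) (hη : 0 ≤ η)
    (hsum : α + β + γ + δ + η < 1)
    (hT : ∀ x y : X, dist (T x) (T y) ≤
      α * dist x y + β * dist x (T x) + γ * dist y (T y) + δ * dist x (T y) + η * dist y (T x))
    (x₀ : X) :
    CauchySeq (fun n => T^[n] x₀) := by
  have hden : 0 < 2 - β - γ - δ - η := by linarith
  set k : ℝ := (2 * α + β + γ + δ + η) / (2 - β - γ - δ - η) with hk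
  have hk0 : 0 ≤ k := div_nonneg (by linarith) hden.le
  have hk1 : k < 1 := (div_lt_one hden).2 (by linarith)
  -- one-step contraction of consecutive distances
  have step : ∀ x : X, dist (T x) (T (T x)) ≤ k * dist x (T x) := by
    intro x
    have h1 := hT x (T x)
    have h2 := hT (T x) x
    have htri : dist x (T (T x)) ≤ dist x (T x) + dist (T x) (T (T x)) :=
      dist_triangle _ _ _
    have hc1 : dist (T (T x)) (T x) = dist (T x) (T (T x)) := dist_comm _ _
    have hc2 : dist (T x) x = dist x (T x) := dist_comm _ _
    have hself : dist (T x) (T x) = 0 := dist_self _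
    have key : (2 - β - γ - δ - η) * dist (T x) (T (T x)) ≤
        (2 * α + β + γ + δ + η) * dist x (T x) := by
      nlinarith [dist_nonneg (x := x) (y := T x), dist_nonneg (x := T x) (y := T (T x))]
    calc dist (T x) (T (T x))
        = ((2 - β - γ - δ - η) * dist (T x) (T (T x))) / (2 - β - γ - δ - η) := by
          field_simp
      _ ≤ ((2 * α + β + γ + δ + η) * dist x (T x)) / (2 - β - γ - δ - η) :=
          div_le_div_of_nonneg_right key hden.le
      _ = k * dist x (T x) := by rw [hk]; ring
  have geom : ∀ n : ℕ, dist (T^[n] x₀) (T^[n+1] x₀) ≤ dist x₀ (T x₀) * k ^ n := by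
    intro n
    induction n with
    | zero => simp
    | succ n ih =>
      have h1 : T^[n+1] x₀ = T (T^[n] x₀) := Function.iterate_succ_apply' T n x₀
      have h2 : T^[n+2] x₀ = T (T (T^[n] x₀)) := by
        rw [Function.iterate_succ_apply' T (n+1) x₀, h1]
      calc dist (T^[n+1] x₀) (T^[n+1+1] x₀)
          = dist (T (T^[n] x₀)) (T (T (T^[n] x₀))) := by rw [h1, h2]
        _ ≤ k * dist (T^[n] x₀) (T (T^[n] x₀)) := step _
        _ = k * dist (T^[n] x₀) (T^[n+1] x₀) := by rw [h1]
        _ ≤ k * (dist x₀ (T x₀) * k ^ n) := mul_le_mul_of_nonneg_left ih hk0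
        _ = dist x₀ (T x₀) * k ^ (n+1) := by ring
  exact cauchySeq_of_le_geometric k (dist x₀ (T x₀)) hk1 geom
end

section
/- Let X be a separable Banach space, (Ω, Σ) a measurable space, and T : Ω × X → X a map such that ω ↦ T(ω, x) is measurable for each x, and for each ω the map x ↦ T(ω, x) satisfies the Hardy–Rogers condition ‖T(ω,x₁) − T(ω,x₂)‖ ≤ α₁‖x₁ − x₂‖ + α₂‖x₁ − T(ω,x₁)‖ + α₃‖x₂ − T(ω,x₂)‖ + α₄‖x₁ − T(ω,x₂)‖ + α₅‖x₂ − T(ω,x₁)‖ with fixed constants αᵢ ≥ 0 and α₁+α₂+α₃+α₄+α₅ < 1. Then there exists a measurable function x* : Ω → X such that T(ω, x*(ω)) = x*(ω) for all ω ∈ Ω, and for each ω this fixed point is unique. -/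
open Filter Topology

theorem random_hardy_rogers_fixed_point {Ω : Type*} [MeasurableSpace Ω]
    {X : Type*} [NormedAddCommGroup X] [NormedSpace ℝ X] [CompleteSpace X] [Nonempty X]
    [TopologicalSpace.SeparableSpace X] [MeasurableSpace X] [BorelSpace X]
    (T : Ω → X → X) (α₁ α₂ α₃ α₄ α₅ : ℝ)
    (h1 : 0 ≤ α₁) (h2 : 0 ≤ α₂) (h3 : 0 ≤ α₃) (h4 : 0 ≤ α₄) (h5 : 0 ≤ α₅)
    (hsum : α₁ + α₂ + α₃ + α₄ + α₅ < 1)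
    (hmeas : ∀ x : X, Measurable (fun ω => T ω x))
    (hT : ∀ ω : Ω, ∀ x₁ x₂ : X, ‖T ω x₁ - T ω x₂‖ ≤
      α₁ * ‖x₁ - x₂‖ + α₂ * ‖x₁ - T ω x₁‖ + α₃ * ‖x₂ - T ω x₂‖ +
      α₄ * ‖x₁ - T ω x₂‖ + α₅ * ‖x₂ - T ω x₁‖) :
    ∃ xs : Ω → X, Measurable xs ∧
      ∀ ω : Ω, T ω (xs ω) = xs ω ∧ ∀ y : X, T ω y = y → y = xs ω := by
  classical
  have hden : 0 < 1 - α₁ - α₄ - α₅ := by nlinarith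
  have hden2 : 0 < 1 - α₂ - α₅ := by nlinarith
  -- existence of a fixed point for each ω
  have exu : ∀ ω : Ω, ∃ z : X, T ω z = z := by
    intro ω
    set k : ℝ := (2 * α₁ + (α₂ + α₃ + α₄ + α₅)) / (2 - (α₂ + α₃ + α₄ + α₅)) with hkdef
    have hkd : 0 < 2 - (α₂ + α₃ + α₄ + α₅) := by nlinarith
    have hk1 : k < 1 := (div_lt_one hkd).mpr (by nlinarith)
    have step : ∀ x : X, ‖T ω x - T ω (T ω x)‖ ≤ k * ‖x - T ω x‖ := by
      intro x
      set y := T ω x with hy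
      set w := T ω y with hw
      have hA := hT ω y x
      have hB := hT ω x y
      rw [← hy, ← hw] at hA hB
      have e1 : ‖y - x‖ = ‖x - y‖ := norm_sub_rev _ _
      have e2 : ‖w - y‖ = ‖y - w‖ := norm_sub_rev _ _
      have e3 : ‖x - w‖ ≤ ‖x - y‖ + ‖y - w‖ := by
        have := dist_triangle x y w
        simpa [dist_eq_norm] using this
      have e4 : ‖y - y‖ = (0 : ℝ) := by simp
      have key : (2 - (α₂ + α₃ + α₄ + α₅)) * ‖y - w‖ ≤
          (2 * α₁ + (α₂ + α₃ + α₄ + α₅)) * ‖x - y‖ := by nlinarith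
      rw [hkdef, div_mul_eq_mul_div, le_div_iff₀ hkd]
      nlinarith
    set x₀ : X := Classical.arbitrary X with hx₀
    set a : ℕ → X := fun n => (fun y => T ω y)^[n] x₀ with ha
    have hstep : ∀ n, a (n + 1) = T ω (a n) := by
      intro n
      simp [ha, Function.iterate_succ_apply']
    have hk0 : 0 ≤ k := div_nonneg (by nlinarith) hkd.le
    have hd : ∀ n, dist (a n) (a (n + 1)) ≤ ‖x₀ - T ω x₀‖ * k ^ n := by
      intro n
      induction n with
      | zero => simp [dist_eq_norm, hstep 0, ha]
      | succ n ih =>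
        have h1' : dist (a (n + 1)) (a (n + 2)) ≤ k * dist (a n) (a (n + 1)) := by
          rw [dist_eq_norm, dist_eq_norm, hstep n, hstep (n + 1), hstep n]
          exact step (a n)
        calc dist (a (n + 1)) (a (n + 2)) ≤ k * dist (a n) (a (n + 1)) := h1'
          _ ≤ k * (‖x₀ - T ω x₀‖ * k ^ n) := by
              exact mul_le_mul_of_nonneg_left ih hk0
          _ = ‖x₀ - T ω x₀‖ * k ^ (n + 1) := by ring
    have hC : CauchySeq a := cauchySeq_of_le_geometric k _ hk1 hd
    obtain ⟨z, hz⟩ := cauchySeq_tendsto_of_complete hC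
    have h1' : Tendsto (fun n => a (n + 1)) atTop (𝓝 z) :=
      hz.comp (tendsto_add_atTop_nat 1)
    have lim1 : Tendsto (fun n => ‖T ω z - a (n + 1)‖) atTop (𝓝 ‖T ω z - z‖) :=
      (tendsto_const_nhds.sub h1').norm
    have tA : Tendsto (fun n => ‖z - a n‖) atTop (𝓝 0) := by
      simpa using ((tendsto_const_nhds : Tendsto (fun _ : ℕ => z) atTop (𝓝 z)).sub hz).norm
    have tB : Tendsto (fun n => ‖a n - a (n + 1)‖) atTop (𝓝 0) := by
      simpa using (hz.sub h1').norm
    have tC : Tendsto (fun n => ‖z - a (n + 1)‖) atTop (𝓝 0) := by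
      simpa using ((tendsto_const_nhds : Tendsto (fun _ : ℕ => z) atTop (𝓝 z)).sub h1').norm
    have tD : Tendsto (fun n => ‖a n - T ω z‖) atTop (𝓝 ‖z - T ω z‖) :=
      (hz.sub tendsto_const_nhds).norm
    have total : Tendsto (fun n => α₁ * ‖z - a n‖ + α₂ * ‖z - T ω z‖ +
        α₃ * ‖a n - a (n + 1)‖ + α₄ * ‖z - a (n + 1)‖ + α₅ * ‖a n - T ω z‖) atTop
        (𝓝 (α₁ * 0 + α₂ * ‖z - T ω z‖ + α₃ * 0 + α₄ * 0 + α₅ * ‖z - T ω z‖)) :=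
      ((((tA.const_mul α₁).add tendsto_const_nhds).add (tB.const_mul α₃)).add
        (tC.const_mul α₄)).add (tD.const_mul α₅)
    have bound : ∀ n, ‖T ω z - a (n + 1)‖ ≤ α₁ * ‖z - a n‖ + α₂ * ‖z - T ω z‖ +
        α₃ * ‖a n - a (n + 1)‖ + α₄ * ‖z - a (n + 1)‖ + α₅ * ‖a n - T ω z‖ := by
      intro n
      have := hT ω z (a n)
      rwa [← hstep n] at this
    have hle : ‖T ω z - z‖ ≤ α₁ * 0 + α₂ * ‖z - T ω z‖ + α₃ * 0 + α₄ * 0 +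
        α₅ * ‖z - T ω z‖ := le_of_tendsto_of_tendsto' lim1 total bound
    have hrev : ‖z - T ω z‖ = ‖T ω z - z‖ := norm_sub_rev _ _
    have hzero : ‖T ω z - z‖ = 0 := by nlinarith [norm_nonneg (T ω z - z)]
    exact ⟨z, sub_eq_zero.mp (norm_eq_zero.mp hzero)⟩
  -- uniqueness
  have uniq : ∀ ω : Ω, ∀ y w : X, T ω y = y → T ω w = w → y = w := by
    intro ω y w hy hw
    have := hT ω y w
    rw [hy, hw] at this
    simp only [sub_self, norm_zero] at this
    have hrev : ‖w - y‖ = ‖y - w‖ := norm_sub_rev _ _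
    have : ‖y - w‖ = 0 := by nlinarith [norm_nonneg (y - w)]
    exact sub_eq_zero.mp (norm_eq_zero.mp this)
  choose z hz using exu
  -- approximation inequalities
  set C₁ : ℝ := (1 + α₁ + α₄ + α₅) / (1 - α₂ - α₅) with hC₁def
  set C₂ : ℝ := (1 + α₂ + α₅) / (1 - α₁ - α₄ - α₅) with hC₂def
  have hC₁0 : 0 ≤ C₁ := div_nonneg (by nlinarith) hden2.le
  have hC₂0 : 0 ≤ C₂ := div_nonneg (by nlinarith) hden.le
  have main : ∀ ω : Ω, ∀ x : X, ‖T ω x - z ω‖ ≤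
      (α₁ + α₄ + α₅) * ‖x - z ω‖ + (α₂ + α₅) * ‖x - T ω x‖ := by
    intro ω x
    have := hT ω x (z ω)
    rw [hz ω] at this
    have e3 : ‖z ω - T ω x‖ ≤ ‖z ω - x‖ + ‖x - T ω x‖ := by
      have := dist_triangle (z ω) x (T ω x)
      simpa [dist_eq_norm] using this
    have e1 : ‖z ω - x‖ = ‖x - z ω‖ := norm_sub_rev _ _
    simp only [sub_self, norm_zero] at this
    nlinarith
  have apx1 : ∀ ω : Ω, ∀ x : X, ‖x - T ω x‖ ≤ C₁ * ‖x - z ω‖ := by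
    intro ω x
    have hm := main ω x
    have e : ‖x - T ω x‖ ≤ ‖x - z ω‖ + ‖z ω - T ω x‖ := by
      have := dist_triangle x (z ω) (T ω x)
      simpa [dist_eq_norm] using this
    have e2 : ‖z ω - T ω x‖ = ‖T ω x - z ω‖ := norm_sub_rev _ _
    rw [hC₁def, div_mul_eq_mul_div, le_div_iff₀ hden2]
    nlinarith
  have apx2 : ∀ ω : Ω, ∀ x : X, ‖x - z ω‖ ≤ C₂ * ‖x - T ω x‖ := by
    intro ω x
    have hm := main ω x
    have e : ‖x - z ω‖ ≤ ‖x - T ω x‖ + ‖T ω x - z ω‖ := by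
      have := dist_triangle x (T ω x) (z ω)
      simpa [dist_eq_norm] using this
    rw [hC₂def, div_mul_eq_mul_div, le_div_iff₀ hden]
    nlinarith
  clear_value C₁ C₂
  -- measurable approximating sequence
  set u : ℕ → X := TopologicalSpace.denseSeq X with hu
  have hdr : DenseRange u := TopologicalSpace.denseRange_denseSeq X
  have hex : ∀ n : ℕ, ∀ ω : Ω, ∃ j : ℕ, ‖u j - T ω (u j)‖ < 1 / ((n : ℝ) + 1) := by
    intro n ω
    have hpos : (0 : ℝ) < 1 / ((n : ℝ) + 1) := by positivity
    have hεpos : (0 : ℝ) < (1 / ((n : ℝ) + 1)) / (C₁ + 1) := by positivity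
    obtain ⟨j, hj⟩ := Metric.denseRange_iff.mp hdr (z ω) _ hεpos
    refine ⟨j, ?_⟩
    have hj' : ‖u j - z ω‖ < (1 / ((n : ℝ) + 1)) / (C₁ + 1) := by
      rwa [dist_comm, dist_eq_norm] at hj
    have h1' : ‖u j - T ω (u j)‖ ≤ C₁ * ‖u j - z ω‖ := apx1 ω (u j)
    have h2' : C₁ * ‖u j - z ω‖ ≤ C₁ * ((1 / ((n : ℝ) + 1)) / (C₁ + 1)) :=
      mul_le_mul_of_nonneg_left hj'.le hC₁0
    have h3' : C₁ * ((1 / ((n : ℝ) + 1)) / (C₁ + 1)) < 1 / ((n : ℝ) + 1) := by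
      have hc : (0:ℝ) < C₁ + 1 := by linarith
      have heq : C₁ * ((1 / ((n : ℝ) + 1)) / (C₁ + 1)) =
          (C₁ / (C₁ + 1)) * (1 / ((n : ℝ) + 1)) := by ring
      have hlt : C₁ / (C₁ + 1) < 1 := (div_lt_one hc).mpr (by linarith)
      rw [heq]
      have := mul_lt_mul_of_pos_right hlt hpos
      linarith
    linarith
  set g : ℕ → Ω → X := fun n ω => u (Nat.find (hex n ω)) with hg
  have hgmeas : ∀ n, Measurable (g n) := by
    intro n
    have hfind : Measurable fun ω => Nat.find (hex n ω) := by
      apply measurable_find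
      intro j
      have : Measurable fun ω => ‖u j - T ω (u j)‖ :=
        (measurable_const.sub (hmeas (u j))).norm
      exact measurableSet_lt this measurable_const
    exact measurable_from_top.comp hfind
  have hconv : ∀ ω, Tendsto (fun n => g n ω) atTop (𝓝 (z ω)) := by
    intro ω
    rw [tendsto_iff_norm_sub_tendsto_zero]
    have hb : ∀ n : ℕ, ‖g n ω - z ω‖ ≤ C₂ * (1 / ((n : ℝ) + 1)) := by
      intro n
      have hspec := Nat.find_spec (hex n ω)
      calc ‖g n ω - z ω‖ ≤ C₂ * ‖g n ω - T ω (g n ω)‖ := apx2 ω _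
        _ ≤ C₂ * (1 / ((n : ℝ) + 1)) := mul_le_mul_of_nonneg_left hspec.le hC₂0
    have hlim : Tendsto (fun n : ℕ => C₂ * (1 / ((n : ℝ) + 1))) atTop (𝓝 0) := by
      simpa using tendsto_one_div_add_atTop_nhds_zero_nat.const_mul C₂
    exact squeeze_zero (fun n => norm_nonneg _) hb hlim
  refine ⟨z, measurable_of_tendsto_metrizable hgmeas (tendsto_pi_nhds.mpr hconv), ?_⟩
  intro ω
  exact ⟨hz ω, fun y hy => uniq ω y (z ω) hy (hz ω)⟩
end

section
/- Let X be a separable Banach space, (Ω, Σ) a measurable space, and T : Ω × X → X such that ω ↦ T(ω, x) is measurable for each x and for each ω, x ↦ T(ω,x) satisfies the Kannan condition ‖T(ω,x₁) − T(ω,x₂)‖ ≤ β·(‖x₁ − T(ω,x₁)‖ + ‖x₂ − T(ω,x₂)‖) with a fixed constant β ∈ [0, 1/2). Then there exists a measurable function x* : Ω → X with T(ω, x*(ω)) = x*(ω) for all ω, and for each ω the fixed point of T(ω,·) is unique. -/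
theorem kannan_fixed {X : Type*} [NormedAddCommGroup X] [CompleteSpace X] [Nonempty X]
    (f : X → X) (β : ℝ) (hβ0 : 0 ≤ β) (hβ : β < 1 / 2)
    (hf : ∀ x₁ x₂ : X, ‖f x₁ - f x₂‖ ≤ β * (‖x₁ - f x₁‖ + ‖x₂ - f x₂‖)) :
    ∃ x : X, f x = x := by
  have h1β : 0 < 1 - β := by linarith
  set r : ℝ := β / (1 - β) with hr
  have hr0 : 0 ≤ r := div_nonneg hβ0 h1β.le
  have hr1 : r < 1 := by
    rw [div_lt_one h1β]; linarith
  set u : ℕ → X := fun n => f^[n] (Classical.arbitrary X) with hu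
  have hstep : ∀ n, u (n + 1) = f (u n) := by
    intro n
    simp [hu, Function.iterate_succ_apply']
  set d : ℕ → ℝ := fun n => ‖u n - u (n + 1)‖ with hd
  have hdstep : ∀ n, d (n + 1) ≤ r * d n := by
    intro n
    have := hf (u n) (u (n + 1))
    rw [← hstep n, ← hstep (n+1)] at this
    have h2 : d (n + 1) ≤ β * (d n + d (n + 1)) := this
    rw [hr, div_mul_eq_mul_div, le_div_iff₀ h1β]
    nlinarith [norm_nonneg (u (n+1) - u (n+2))]
  have hdgeom : ∀ n, d n ≤ d 0 * r ^ n := by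
    intro n
    induction n with
    | zero => simp
    | succ n ih =>
      calc d (n + 1) ≤ r * d n := hdstep n
        _ ≤ r * (d 0 * r ^ n) := by nlinarith
        _ = d 0 * r ^ (n + 1) := by ring
  have hcauchy : CauchySeq u := by
    apply cauchySeq_of_le_geometric r (d 0) hr1
    intro n
    rw [dist_eq_norm]
    exact hdgeom n
  obtain ⟨x, hx⟩ := cauchySeq_tendsto_of_complete hcauchy
  have hd0 : Filter.Tendsto d Filter.atTop (nhds 0) := by
    apply squeeze_zero (fun n => norm_nonneg _) hdgeom
    have := tendsto_pow_atTop_nhds_zero_of_lt_one hr0 hr1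
    simpa using (tendsto_const_nhds (x := d 0)).mul this
  -- key: ‖f x - x‖ ≤ β * ‖x - f x‖
  have key : ‖f x - x‖ ≤ β * ‖x - f x‖ := by
    have h1 : Filter.Tendsto (fun n => ‖f x - u (n + 1)‖) Filter.atTop (nhds ‖f x - x‖) := by
      have : Filter.Tendsto (fun n => u (n + 1)) Filter.atTop (nhds x) :=
        hx.comp (Filter.tendsto_add_atTop_nat 1)
      exact ((tendsto_const_nhds.sub this).norm)
    have h2 : Filter.Tendsto (fun n => β * (‖x - f x‖ + d n)) Filter.atTop
        (nhds (β * ‖x - f x‖)) := by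
      have := (tendsto_const_nhds (x := ‖x - f x‖)).add hd0
      simpa using (tendsto_const_nhds (x := β)).mul this
    refine le_of_tendsto_of_tendsto' h1 h2 ?_
    intro n
    have h := hf x (u n)
    rw [← hstep n] at h
    exact h
  have hz : ‖f x - x‖ = 0 := by
    nlinarith [norm_nonneg (f x - x), norm_sub_rev (f x) x]
  exact ⟨x, sub_eq_zero.mp (norm_eq_zero.mp hz)⟩

theorem random_kannan_fixed_point {Ω : Type*} [MeasurableSpace Ω]
    {X : Type*} [NormedAddCommGroup X] [NormedSpace ℝ X] [CompleteSpace X] [Nonempty X]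
    [TopologicalSpace.SeparableSpace X] [MeasurableSpace X] [BorelSpace X]
    (T : Ω → X → X) (β : ℝ) (hβ0 : 0 ≤ β) (hβ : β < 1 / 2)
    (hmeas : ∀ x : X, Measurable (fun ω => T ω x))
    (hT : ∀ ω : Ω, ∀ x₁ x₂ : X, ‖T ω x₁ - T ω x₂‖ ≤
      β * (‖x₁ - T ω x₁‖ + ‖x₂ - T ω x₂‖)) :
    ∃ xs : Ω → X, Measurable xs ∧
      ∀ ω : Ω, T ω (xs ω) = xs ω ∧ ∀ y : X, T ω y = y → y = xs ω := by
  have h1β : 0 < 1 - β := by linarith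
  have exu : ∀ ω, ∃ x, T ω x = x := fun ω => kannan_fixed (T ω) β hβ0 hβ (hT ω)
  set xfix : Ω → X := fun ω => (exu ω).choose with hxfix
  have hfix : ∀ ω, T ω (xfix ω) = xfix ω := fun ω => (exu ω).choose_spec
  -- uniqueness
  have uniq : ∀ ω y, T ω y = y → y = xfix ω := by
    intro ω y hy
    have h := hT ω y (xfix ω)
    rw [hy, hfix ω, sub_self, sub_self, norm_zero] at h
    have : ‖y - xfix ω‖ = 0 := le_antisymm (by simpa using h) (norm_nonneg _)
    exact sub_eq_zero.mp (norm_eq_zero.mp this)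
  -- comparison inequalities
  have hub : ∀ ω x, ‖x - xfix ω‖ ≤ (1 + β) * ‖x - T ω x‖ := by
    intro ω x
    have h := hT ω x (xfix ω)
    rw [hfix ω, sub_self, norm_zero] at h
    calc ‖x - xfix ω‖ ≤ ‖x - T ω x‖ + ‖T ω x - xfix ω‖ := norm_sub_le_norm_sub_add_norm_sub _ _ _
      _ ≤ ‖x - T ω x‖ + β * ‖x - T ω x‖ := by
          have := h; nlinarith [h]
      _ = (1 + β) * ‖x - T ω x‖ := by ring
  have hlb : ∀ ω x, (1 - β) * ‖x - T ω x‖ ≤ ‖x - xfix ω‖ := by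
    intro ω x
    have h := hT ω (xfix ω) x
    rw [hfix ω, sub_self, norm_zero] at h
    have h2 : ‖x - T ω x‖ ≤ ‖x - xfix ω‖ + ‖xfix ω - T ω x‖ :=
      norm_sub_le_norm_sub_add_norm_sub _ _ _
    have h3 : ‖xfix ω - T ω x‖ = ‖T ω (xfix ω) - T ω x‖ := by rw [hfix ω]
    nlinarith [h, h2, h3]
  have : SecondCountableTopology X := inferInstance
  -- dense sequence
  obtain ⟨dseq, hdense⟩ := TopologicalSpace.exists_dense_seq X
  have hnm : ∀ k : ℕ, Measurable (fun ω => ‖dseq k - T ω (dseq k)‖) :=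
    fun k => (measurable_const.sub (hmeas (dseq k))).norm
  have hex : ∀ n : ℕ, ∀ ω : Ω, ∃ k : ℕ, ‖dseq k - T ω (dseq k)‖ < 1 / (n + 1) := by
    intro n ω
    have hpos : (0:ℝ) < (1 - β) * (1 / (n + 1)) := by
      apply mul_pos h1β
      positivity
    obtain ⟨k, hk⟩ := hdense.exists_dist_lt (xfix ω) hpos
    refine ⟨k, ?_⟩
    have := hlb ω (dseq k)
    rw [dist_comm, dist_eq_norm] at hk
    have h4 : (1 - β) * ‖dseq k - T ω (dseq k)‖ < (1 - β) * (1 / (n + 1)) :=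
      lt_of_le_of_lt this hk
    exact lt_of_mul_lt_mul_left h4 h1β.le
  set g : ℕ → Ω → X := fun n ω => dseq (Nat.find (hex n ω)) with hg
  have hgm : ∀ n, Measurable (g n) := by
    intro n
    have hf : Measurable fun ω => Nat.find (hex n ω) :=
      measurable_find _ (fun k => measurableSet_lt (hnm k) measurable_const)
    exact measurable_from_top.comp hf
  have hgb : ∀ n ω, ‖g n ω - xfix ω‖ ≤ (1 + β) * (1 / (n + 1)) := by
    intro n ω
    have h1 := Nat.find_spec (hex n ω)
    have h2 := hub ω (g n ω)
    have h1b : (0:ℝ) ≤ 1 + β := by linarith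
    calc ‖g n ω - xfix ω‖ ≤ (1 + β) * ‖g n ω - T ω (g n ω)‖ := h2
      _ ≤ (1 + β) * (1 / (n + 1)) := by
          apply mul_le_mul_of_nonneg_left (le_of_lt h1) h1b
  have htend : ∀ ω, Filter.Tendsto (fun n => g n ω) Filter.atTop (nhds (xfix ω)) := by
    intro ω
    rw [tendsto_iff_norm_sub_tendsto_zero]
    apply squeeze_zero (fun n => norm_nonneg _) (fun n => hgb n ω)
    have := (tendsto_one_div_add_atTop_nhds_zero_nat :
      Filter.Tendsto (fun n : ℕ => 1 / ((n : ℝ) + 1)) Filter.atTop (nhds 0))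
    simpa using (tendsto_const_nhds (x := (1+β))).mul this
  have hxm : Measurable xfix := measurable_of_tendsto_metrizable hgm
    (tendsto_pi_nhds.mpr htend)
  exact ⟨xfix, hxm, fun ω => ⟨hfix ω, fun y hy => uniq ω y hy⟩⟩
end

section
/- Let T : X → X satisfy the Hardy–Rogers condition with constants α, β, γ, δ, η ≥ 0, α + β + γ + δ + η < 1, on a metric space (X,d), and suppose p is a fixed point of T. Then for any x₀ ∈ X, the Picard iterates xₙ = Tⁿ x₀ converge to p. -/
theorem hardy_rogers_picard_converges {X : Type*} [MetricSpace X]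
    (T : X → X) (α β γ δ η : ℝ)
    (hα : 0 ≤ α) (hβ : 0 ≤ β) (hγ : 0 ≤ γ) (hδ : 0 ≤ δ) (hη : 0 ≤ η)
    (hsum : α + β + γ + δ + η < 1)
    (hT : ∀ x y : X, dist (T x) (T y) ≤
      α * dist x y + β * dist x (T x) + γ * dist y (T y) + δ * dist x (T y) + η * dist y (T x))
    (p : X) (hp : T p = p) (x₀ : X) :
    Filter.Tendsto (fun n => T^[n] x₀) Filter.atTop (nhds p) := by
  set k : ℝ := (2*α + β + γ + δ + η) / (2 - β - γ - δ - η) with hk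
  have hden : 0 < 2 - β - γ - δ - η := by linarith
  have hk0 : 0 ≤ k := div_nonneg (by linarith) hden.le
  have hk1 : k < 1 := (div_lt_one hden).mpr (by linarith)
  have step : ∀ x : X, dist (T x) p ≤ k * dist x p := by
    intro x
    have h1 := hT x p
    have h2 := hT p x
    rw [hp] at h1 h2
    have hpp : dist p p = 0 := dist_self p
    have htri : dist x (T x) ≤ dist x p + dist p (T x) := dist_triangle x p (T x)
    have hsym1 : dist p (T x) = dist (T x) p := dist_comm p (T x)
    have hsym2 : dist p x = dist x p := dist_comm p x
    rw [hk, div_mul_eq_mul_div, le_div_iff₀ hden]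
    nlinarith [dist_nonneg (x := x) (y := p), dist_nonneg (x := T x) (y := p),
      dist_nonneg (x := x) (y := T x)]
  have bound : ∀ n : ℕ, dist (T^[n] x₀) p ≤ k ^ n * dist x₀ p := by
    intro n
    induction n with
    | zero => simp
    | succ n ih =>
      rw [Function.iterate_succ_apply']
      calc dist (T (T^[n] x₀)) p ≤ k * dist (T^[n] x₀) p := step _
        _ ≤ k * (k ^ n * dist x₀ p) := by
            exact mul_le_mul_of_nonneg_left ih hk0
        _ = k ^ (n+1) * dist x₀ p := by ring
  rw [tendsto_iff_dist_tendsto_zero]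
  have h0 : Filter.Tendsto (fun n : ℕ => k ^ n * dist x₀ p) Filter.atTop (nhds 0) := by
    have := tendsto_pow_atTop_nhds_zero_of_lt_one hk0 hk1
    simpa using this.mul_const (dist x₀ p)
  exact squeeze_zero (fun n => dist_nonneg) bound h0
end
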